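/- Let A be an m × n real matrix with full column rank, with rows a₁, …, a_m all nonzero, and let x, y ∈ ℝⁿ. Choose index i with probability ‖a_i‖²/‖A‖_F². If x_new is the orthogonal projection of y onto the hyperplane {z : ⟨a_i, z⟩ = ⟨a_i, x⟩}, then 𝔼‖x_new - x‖² ≤ (1 - 1/R) ‖y - x‖², where R = ‖A⁻¹‖² ‖A‖_F² with ‖A⁻¹‖ = inf{M : M‖Az‖ ≥ ‖z‖ for all z}. -/

import Mathlib

open Finset

/-- Euclidean norm on `Fin k → ℝ`. -/
noncomputable def enorm {k : ℕ} (v : Fin k → ℝ) : ℝ := Real.sqrt (∑ j, v j ^ 2)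

/-- Standard inner product on `Fin k → ℝ`. -/
noncomputable def ip {k : ℕ} (v w : Fin k → ℝ) : ℝ := ∑ j, v j * w j

/-- Frobenius norm of a matrix. -/
noncomputable def frob {m n : ℕ} (A : Matrix (Fin m) (Fin n) ℝ) : ℝ :=
  Real.sqrt (∑ i, ∑ j, A i j ^ 2)

/-- `‖A⁻¹‖ = inf {M : M‖Az‖ ≥ ‖z‖ for all z}`. -/
noncomputable def invNorm {m n : ℕ} (A : Matrix (Fin m) (Fin n) ℝ) : ℝ :=
  sInf {M : ℝ | ∀ z : Fin n → ℝ, _root_.enorm z ≤ M * _root_.enorm (A.mulVec z)}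


lemma enorm_sq {k : ℕ} (v : Fin k → ℝ) : _root_.enorm v ^ 2 = ∑ j, v j ^ 2 :=
  Real.sq_sqrt (Finset.sum_nonneg fun _ _ => sq_nonneg _)

lemma enorm_nonneg {k : ℕ} (v : Fin k → ℝ) : 0 ≤ _root_.enorm v := Real.sqrt_nonneg _

lemma enorm_pos_of_ne {k : ℕ} {v : Fin k → ℝ} (hv : v ≠ 0) : 0 < _root_.enorm v := by
  rcases Function.ne_iff.mp hv with ⟨j, hj⟩
  apply Real.sqrt_pos.mpr
  apply Finset.sum_pos' (fun _ _ => sq_nonneg _)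
  exact ⟨j, Finset.mem_univ j, pow_pos (abs_pos.mpr hj) 2 |>.trans_eq (by rw [sq_abs])⟩

lemma enorm_eq_norm {k : ℕ} (v : Fin k → ℝ) :
    _root_.enorm v = ‖(WithLp.equiv 2 (Fin k → ℝ)).symm v‖ := by
  rw [EuclideanSpace.norm_eq]
  unfold _root_.enorm
  simp [sq_abs]

lemma mulVec_injective_of_rank {m n : ℕ} (A : Matrix (Fin m) (Fin n) ℝ)
    (hrank : A.rank = n) : Function.Injective A.mulVec := by
  have h := A.mulVecLin.finrank_range_add_finrank_ker
  rw [show Module.finrank ℝ (Fin n → ℝ) = n by simp] at h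
  rw [Matrix.rank] at hrank
  rw [hrank] at h
  have hker : Module.finrank ℝ (LinearMap.ker A.mulVecLin) = 0 := by omega
  have : LinearMap.ker A.mulVecLin = ⊥ := Submodule.finrank_eq_zero.mp hker
  exact LinearMap.ker_eq_bot.mp this

lemma exists_bound {m n : ℕ} (A : Matrix (Fin m) (Fin n) ℝ) (hrank : A.rank = n) :
    ∃ M : ℝ, ∀ z : Fin n → ℝ, _root_.enorm z ≤ M * _root_.enorm (A.mulVec z) := by
  set en := WithLp.linearEquiv 2 ℝ (Fin n → ℝ)
  set em := WithLp.linearEquiv 2 ℝ (Fin m → ℝ)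
  set f : EuclideanSpace ℝ (Fin n) →ₗ[ℝ] EuclideanSpace ℝ (Fin m) :=
    em.symm.toLinearMap ∘ₗ A.mulVecLin ∘ₗ en.toLinearMap with hf
  have hinj : Function.Injective f := by
    intro a b hab
    apply en.injective
    exact mulVec_injective_of_rank A hrank (em.symm.injective hab)
  obtain ⟨K, -, hK⟩ := f.exists_antilipschitzWith (LinearMap.ker_eq_bot.mpr hinj)
  refine ⟨K, fun z => ?_⟩
  have h := hK.le_mul_dist (en.symm z) 0
  rw [map_zero] at h
  rw [dist_zero_right, dist_zero_right] at h
  have hz : f (en.symm z) = em.symm (A.mulVec z) := rfl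
  rw [hz] at h
  rw [enorm_eq_norm, enorm_eq_norm]
  exact h

lemma invNorm_spec {m n : ℕ} (A : Matrix (Fin m) (Fin n) ℝ) (hrank : A.rank = n)
    (z : Fin n → ℝ) : _root_.enorm z ≤ invNorm A * _root_.enorm (A.mulVec z) := by
  have hne : {M : ℝ | ∀ z : Fin n → ℝ, _root_.enorm z ≤ M * _root_.enorm (A.mulVec z)}.Nonempty :=
    exists_bound A hrank
  rcases eq_or_ne z 0 with rfl | hz
  · simp [_root_.enorm, Matrix.mulVec_zero]
  · have hAz : A.mulVec z ≠ 0 := by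
      intro h
      exact hz (mulVec_injective_of_rank A hrank (h.trans (Matrix.mulVec_zero A).symm))
    have hpos := enorm_pos_of_ne hAz
    have : _root_.enorm z / _root_.enorm (A.mulVec z) ≤ invNorm A := by
      apply le_csInf hne
      intro M hM
      exact (div_le_iff₀ hpos).mpr (hM z)
    calc _root_.enorm z = (_root_.enorm z / _root_.enorm (A.mulVec z)) * _root_.enorm (A.mulVec z) := by
          field_simp
      _ ≤ invNorm A * _root_.enorm (A.mulVec z) := by
          apply mul_le_mul_of_nonneg_right this hpos.le

/-- One-step expected contraction of randomized Kaczmarz (noiseless). -/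
theorem stmt_4 (m n : ℕ) (A : Matrix (Fin m) (Fin n) ℝ) (hrank : A.rank = n)
    (hrows : ∀ i, A i ≠ 0) (x y : Fin n → ℝ) :
    ∑ i, (_root_.enorm (A i) ^ 2 / frob A ^ 2) *
        _root_.enorm ((y + ((ip (A i) x - ip (A i) y) / _root_.enorm (A i) ^ 2) • A i) - x) ^ 2 ≤
      (1 - 1 / (invNorm A ^ 2 * frob A ^ 2)) * _root_.enorm (y - x) ^ 2 := by
  rcases Nat.eq_zero_or_pos n with hn | hn
  · subst hn
    simp [_root_.enorm]
  -- n ≥ 1; hence m ≥ 1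
  have hm : 0 < m := by
    have := A.rank_le_height
    omega
  set e := y - x with he
  -- frobenius squared equals sum of row norms squared
  have hfrob : frob A ^ 2 = ∑ i, _root_.enorm (A i) ^ 2 := by
    rw [show frob A ^ 2 = ∑ i, ∑ j, A i j ^ 2 from
      Real.sq_sqrt (Finset.sum_nonneg fun _ _ => Finset.sum_nonneg fun _ _ => sq_nonneg _)]
    exact Finset.sum_congr rfl fun i _ => (enorm_sq (A i)).symm
  have hrowpos : ∀ i, 0 < _root_.enorm (A i) ^ 2 := fun i => by
    have := enorm_pos_of_ne (hrows i); positivity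
  have hF2 : 0 < frob A ^ 2 := by
    rw [hfrob]
    apply Finset.sum_pos (fun i _ => hrowpos i)
    exact ⟨⟨0, hm⟩, Finset.mem_univ _⟩
  have hF0 : frob A ≠ 0 := fun h => by simp [h] at hF2
  -- invNorm positivity
  have hNpos : 0 < invNorm A := by
    set z : Fin n → ℝ := fun _ => 1 with hz
    have hzne : z ≠ 0 := by
      intro h
      have := congrFun h ⟨0, hn⟩
      simp [hz] at this
    have h1 := invNorm_spec A hrank z
    have h2 := enorm_pos_of_ne hzne
    have h3 := enorm_nonneg (A.mulVec z)
    nlinarith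
  -- per-term identity
  have hterm : ∀ i, _root_.enorm ((y + ((ip (A i) x - ip (A i) y) / _root_.enorm (A i) ^ 2) • A i) - x) ^ 2
      = _root_.enorm e ^ 2 - ip (A i) e ^ 2 / _root_.enorm (A i) ^ 2 := by
    intro i
    set a := A i
    set r := _root_.enorm a ^ 2 with hr
    have hrpos := hrowpos i
    set c := (ip a x - ip a y) / r with hc
    have hvec : (y + c • a) - x = e + c • a := by
      rw [he]; abel
    rw [hvec]
    have expand : _root_.enorm (e + c • a) ^ 2
        = _root_.enorm e ^ 2 + (2 * c) * ip a e + c ^ 2 * r := by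
      rw [enorm_sq, enorm_sq, hr, enorm_sq, ip]
      calc ∑ j, (e j + (c • a) j) ^ 2
          = ∑ j, (e j ^ 2 + (2 * c) * (a j * e j) + c ^ 2 * a j ^ 2) := by
            apply Finset.sum_congr rfl
            intro j _
            simp only [Pi.smul_apply, smul_eq_mul]
            ring
        _ = ∑ j, e j ^ 2 + ((2 * c) * ∑ j, a j * e j + c ^ 2 * ∑ j, a j ^ 2) := by
            rw [Finset.sum_add_distrib, Finset.sum_add_distrib, Finset.mul_sum,
              Finset.mul_sum]
            ring
        _ = ∑ j, e j ^ 2 + (2 * c) * ∑ j, a j * e j + c ^ 2 * ∑ j, a j ^ 2 := by ring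
    rw [expand]
    have hipe : ip a e = ip a y - ip a x := by
      simp only [ip, he, Pi.sub_apply]
      rw [← Finset.sum_sub_distrib]
      apply Finset.sum_congr rfl
      intro j _
      ring
    have hcval : c = -(ip a e) / r := by rw [hc, hipe]; ring
    rw [hcval]
    field_simp
    ring
  -- rewrite LHS
  have hsum : ∑ i, (_root_.enorm (A i) ^ 2 / frob A ^ 2) *
      _root_.enorm ((y + ((ip (A i) x - ip (A i) y) / _root_.enorm (A i) ^ 2) • A i) - x) ^ 2
      = _root_.enorm e ^ 2 - _root_.enorm (A.mulVec e) ^ 2 / frob A ^ 2 := by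
    have step : ∀ i ∈ Finset.univ, (_root_.enorm (A i) ^ 2 / frob A ^ 2) *
        _root_.enorm ((y + ((ip (A i) x - ip (A i) y) / _root_.enorm (A i) ^ 2) • A i) - x) ^ 2
        = (_root_.enorm (A i) ^ 2 * _root_.enorm e ^ 2 - ip (A i) e ^ 2) / frob A ^ 2 := by
      intro i _
      rw [hterm i]
      have := (hrowpos i).ne'
      have := (enorm_pos_of_ne (hrows i)).ne'
      field_simp
    rw [Finset.sum_congr rfl step]
    rw [← Finset.sum_div, Finset.sum_sub_distrib, ← Finset.sum_mul]
    rw [← hfrob]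
    have hAe : _root_.enorm (A.mulVec e) ^ 2 = ∑ i, ip (A i) e ^ 2 := by
      rw [enorm_sq]
      apply Finset.sum_congr rfl
      intro i _
      rfl
    rw [hAe]
    field_simp
  rw [hsum]
  -- final inequality
  have hspec := invNorm_spec A hrank e
  have hAe2 : _root_.enorm e ^ 2 ≤ invNorm A ^ 2 * _root_.enorm (A.mulVec e) ^ 2 := by
    nlinarith [enorm_nonneg e, enorm_nonneg (A.mulVec e)]
  have hE := sq_nonneg (_root_.enorm e)
  rw [sub_mul, one_mul]
  have key : _root_.enorm e ^ 2 / (invNorm A ^ 2 * frob A ^ 2) ≤ _root_.enorm (A.mulVec e) ^ 2 / frob A ^ 2 := by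
    rw [div_le_div_iff₀ (by positivity) hF2]
    nlinarith
  have : 1 / (invNorm A ^ 2 * frob A ^ 2) * _root_.enorm e ^ 2
      = _root_.enorm e ^ 2 / (invNorm A ^ 2 * frob A ^ 2) := by ring
  rw [this]
  linarith
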